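/- Let T be a 1.5D terrain and let A* be the maximum area of a convex quadrilateral contained in T, and R* the maximum area of an axis-parallel rectangle contained in T (both maxima assumed attained). Then R* ≥ (1/2)·A*. -/

import Mathlib

open MeasureTheory

def ConvexPos (a b c d : ℝ × ℝ) : Prop :=
  a ∉ convexHull ℝ ({b, c, d} : Set (ℝ × ℝ)) ∧
  b ∉ convexHull ℝ ({a, c, d} : Set (ℝ × ℝ)) ∧
  c ∉ convexHull ℝ ({a, b, d} : Set (ℝ × ℝ)) ∧
  d ∉ convexHull ℝ ({a, b, c} : Set (ℝ × ℝ))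

/-- `S` is a convex quadrilateral: the convex hull of four points in convex position. -/
def IsQuad (S : Set (ℝ × ℝ)) : Prop :=
  ∃ p₁ p₂ p₃ p₄ : ℝ × ℝ, ConvexPos p₁ p₂ p₃ p₄ ∧
    S = convexHull ℝ ({p₁, p₂, p₃, p₄} : Set (ℝ × ℝ))

/-- `S` is a (nondegenerate) axis-parallel rectangle. -/
def IsRect (S : Set (ℝ × ℝ)) : Prop :=
  ∃ p q c d : ℝ, p < q ∧ c < d ∧ S = (Set.Icc p q ×ˢ Set.Icc c d : Set (ℝ × ℝ))

open scoped ENNReal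
open intervalIntegral

lemma cc_eq_Icc {S : Set ℝ} (hne : S.Nonempty) (hcomp : IsCompact S)
    (hconv : Convex ℝ S) : S = Set.Icc (sInf S) (sSup S) := by
  apply Set.Subset.antisymm
  · intro x hx
    exact ⟨csInf_le hcomp.bddBelow hx, le_csSup hcomp.bddAbove hx⟩
  · have h1 : sInf S ∈ S := hcomp.sInf_mem hne
    have h2 : sSup S ∈ S := hcomp.sSup_mem hne
    rw [← segment_eq_Icc (csInf_le_csSup hne hcomp.bddBelow hcomp.bddAbove)]
    exact hconv.segment_subset h1 h2

lemma lemB {c d ts : ℝ} {W : ℝ → ℝ} (hc : 0 ≤ c)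
    (hts : ts ∈ Set.Icc c d) (htspos : 0 < ts)
    (hW : ConcaveOn ℝ (Set.Icc c d) W)
    (hmax : ∀ t ∈ Set.Icc c d, t * W t ≤ ts * W ts) :
    ∀ t ∈ Set.Icc c d, W t ≤ W ts * (2 - t / ts) := by
  intro t0 ht0
  by_contra hcon
  push_neg at hcon
  have hcon' : W ts * (2 * ts - t0) < ts * W t0 := by
    have := (mul_lt_mul_iff_right₀ htspos).2 hcon
    calc W ts * (2 * ts - t0) = ts * (W ts * (2 - t0 / ts)) := by
          field_simp
      _ < ts * W t0 := this
  set B : ℝ := (t0 - ts) * W ts + ts * (W t0 - W ts) with hBdef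
  set C : ℝ := (t0 - ts) * (W t0 - W ts) with hCdef
  have hB : 0 < B := by simp only [hBdef]; nlinarith
  set l : ℝ := min 1 (B / (2 * (|C| + 1))) with hldef
  have habs : 0 ≤ |C| := abs_nonneg C
  have hl0 : 0 < l := by
    apply lt_min one_pos
    positivity
  have hl1 : l ≤ 1 := min_le_left _ _
  have hlB : l ≤ B / (2 * (|C| + 1)) := min_le_right _ _
  have hBC : 0 < B + C * l := by
    have h1 : C * l ≥ -(|C| * l) := by
      have := neg_abs_le C
      nlinarith
    have h2 : |C| * l ≤ |C| * (B / (2 * (|C| + 1))) := by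
      apply mul_le_mul_of_nonneg_left hlB habs
    have h3 : |C| * (B / (2 * (|C| + 1))) ≤ B / 2 := by
      rw [mul_div_assoc', div_le_div_iff₀ (by positivity) (by norm_num)]
      nlinarith
    nlinarith
  set t : ℝ := l * t0 + (1 - l) * ts with htdef
  have htmem : t ∈ Set.Icc c d := by
    constructor
    · have := ht0.1; have := hts.1; simp only [htdef]; nlinarith
    · have := ht0.2; have := hts.2; simp only [htdef]; nlinarith
  have htnn : 0 ≤ t := le_trans hc htmem.1
  have hchord : l * W t0 + (1 - l) * W ts ≤ W t :=
    hW.2 ht0 hts (le_of_lt hl0) (by linarith) (by ring)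
  have hkey : t * (l * W t0 + (1 - l) * W ts) = ts * W ts + l * (B + C * l) := by
    simp only [htdef, hBdef, hCdef]; ring
  have h4 : t * (l * W t0 + (1 - l) * W ts) ≤ t * W t :=
    mul_le_mul_of_nonneg_left hchord htnn
  have h5 := hmax t htmem
  nlinarith [mul_pos hl0 hBC]

set_option maxHeartbeats 1000000 in
theorem max_rectangle_half_approximates_max_quad (a b : ℝ) (f : ℝ → ℝ)
    (hf : ∀ x ∈ Set.Icc a b, 0 ≤ f x) (hcont : ContinuousOn f (Set.Icc a b))
    (T : Set (ℝ × ℝ))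
    (hT : T = {p : ℝ × ℝ | p.1 ∈ Set.Icc a b ∧ p.2 ∈ Set.Icc 0 (f p.1)})
    (Astar Rstar : ℝ)
    (hQmax : ∃ Q : Set (ℝ × ℝ), IsQuad Q ∧ Q ⊆ T ∧ (volume Q).toReal = Astar)
    (hQub : ∀ Q : Set (ℝ × ℝ), IsQuad Q → Q ⊆ T → (volume Q).toReal ≤ Astar)
    (hRmax : ∃ R : Set (ℝ × ℝ), IsRect R ∧ R ⊆ T ∧ (volume R).toReal = Rstar)
    (hRub : ∀ R : Set (ℝ × ℝ), IsRect R → R ⊆ T → (volume R).toReal ≤ Rstar) :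
    Rstar ≥ (1 / 2) * Astar := by
  obtain ⟨Q, hQisq, hQT, hQA⟩ := hQmax
  obtain ⟨p₁, p₂, p₃, p₄, hcp, hQdef⟩ := hQisq
  obtain ⟨R0, hR0rect, hR0T, hR0⟩ := hRmax
  have hRnn : 0 ≤ Rstar := hR0 ▸ ENNReal.toReal_nonneg
  rcases le_or_gt Astar 0 with hA0 | hApos
  · linarith

  have hQconv : Convex ℝ Q := hQdef ▸ convex_convexHull ℝ _
  have hQcomp : IsCompact Q := by
    rw [hQdef]
    exact (Set.toFinite _).isCompact_convexHull (𝕜 := ℝ)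
  have hp1Q : p₁ ∈ Q := hQdef ▸ subset_convexHull ℝ _ (by simp)
  have hQne : Q.Nonempty := ⟨p₁, hp1Q⟩
  have hQclosed : IsClosed Q := hQcomp.isClosed
  have hQmeas : MeasurableSet Q := hQclosed.measurableSet
  -- the projection on the y-axis
  set J : Set ℝ := Prod.snd '' Q with hJdef
  have hJne : J.Nonempty := hQne.image _
  have hJcomp : IsCompact J := hQcomp.image continuous_snd
  have hJconv : Convex ℝ J := by
    have := hQconv.linear_image (LinearMap.snd ℝ ℝ ℝ)
    simpa [hJdef] using this
  set c : ℝ := sInf J with hcdef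
  set d : ℝ := sSup J with hddef
  have hJ : J = Set.Icc c d := cc_eq_Icc hJne hJcomp hJconv
  have hc0 : 0 ≤ c := by
    apply le_csInf hJne
    rintro y ⟨q, hq, rfl⟩
    have := hQT hq
    rw [hT] at this
    exact this.2.1
  -- the width function
  set W : ℝ → ℝ := fun t => (volume {x : ℝ | (x, t) ∈ Q}).toReal with hWdef
  have hW0 : ∀ t, 0 ≤ W t := fun t => ENNReal.toReal_nonneg
  -- slice facts
  have hslfacts : ∀ t ∈ Set.Icc c d,
      (sInf {x : ℝ | (x, t) ∈ Q}, t) ∈ Q ∧ (sSup {x : ℝ | (x, t) ∈ Q}, t) ∈ Q ∧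
      sInf {x : ℝ | (x, t) ∈ Q} ≤ sSup {x : ℝ | (x, t) ∈ Q} ∧
      {x : ℝ | (x, t) ∈ Q} = Set.Icc (sInf {x : ℝ | (x, t) ∈ Q}) (sSup {x : ℝ | (x, t) ∈ Q}) ∧
      W t = sSup {x : ℝ | (x, t) ∈ Q} - sInf {x : ℝ | (x, t) ∈ Q} := by
    intro t ht
    set s : Set ℝ := {x : ℝ | (x, t) ∈ Q} with hsdef
    have hne : s.Nonempty := by
      have htJ : t ∈ J := hJ ▸ ht
      obtain ⟨q, hq, hqt⟩ := htJ
      refine ⟨q.1, ?_⟩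
      show (q.1, t) ∈ Q
      rw [← hqt]
      simpa using hq
    have hclosed : IsClosed s := hQclosed.preimage (continuous_id.prodMk continuous_const)
    have hbd : Bornology.IsBounded s :=
      ((hQcomp.image continuous_fst).isBounded).subset (fun x hx => ⟨(x, t), hx, rfl⟩)
    have hscomp : IsCompact s := Metric.isCompact_of_isClosed_isBounded hclosed hbd
    have hsconv : Convex ℝ s := by
      intro x1 hx1 x2 hx2 u v hu hv huv
      have hmem := hQconv hx1 hx2 hu hv huv
      have hpt : u • ((x1 : ℝ), t) + v • ((x2 : ℝ), t) = (u • x1 + v • x2, t) := by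
        simp only [Prod.smul_mk, Prod.mk_add_mk, smul_eq_mul]
        congr 1
        linear_combination t * huv
      rw [hpt] at hmem
      exact hmem
    have heq := cc_eq_Icc hne hscomp hsconv
    have hle : sInf s ≤ sSup s := csInf_le_csSup hne hscomp.bddBelow hscomp.bddAbove
    refine ⟨hscomp.sInf_mem hne, hscomp.sSup_mem hne, hle, heq, ?_⟩
    show (volume s).toReal = _
    conv_lhs => rw [heq]
    rw [Real.volume_Icc, ENNReal.toReal_ofReal (by linarith)]
  -- the compact maximization
  set K : Set ((ℝ × ℝ) × (ℝ × ℝ)) := (Q ×ˢ Q) ∩ {p | p.1.2 = p.2.2} with hKdef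
  have hKcomp : IsCompact K := (hQcomp.prod hQcomp).inter_right
    (isClosed_eq (continuous_snd.comp continuous_fst) (continuous_snd.comp continuous_snd))
  have hKne : K.Nonempty := ⟨(p₁, p₁), ⟨⟨hp1Q, hp1Q⟩, rfl⟩⟩
  have hgcont : ContinuousOn (fun p : (ℝ × ℝ) × (ℝ × ℝ) => p.1.2 * (p.2.1 - p.1.1)) K := by
    fun_prop
  obtain ⟨pstar, hpK, hpmax⟩ := hKcomp.exists_isMaxOn hKne hgcont
  set x1 : ℝ := pstar.1.1 with hx1def
  set ts : ℝ := pstar.1.2 with htsdef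
  set x2 : ℝ := pstar.2.1 with hx2def
  set S : ℝ := ts * (x2 - x1) with hSdef
  have hpK1 : pstar.1 ∈ Q := hpK.1.1
  have hpK2 : pstar.2 ∈ Q := hpK.1.2
  have hpKeq : ts = pstar.2.2 := hpK.2
  have htsJ : ts ∈ Set.Icc c d := hJ ▸ ⟨pstar.1, hpK1, rfl⟩
  have hcd : c ≤ d := le_trans htsJ.1 htsJ.2
  have hS0 : 0 ≤ S := by
    have := hpmax (⟨⟨hp1Q, hp1Q⟩, rfl⟩ : (p₁, p₁) ∈ K)
    simpa [hSdef] using this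
  -- the key upper bound from rectangles inside T
  have hWmax : ∀ t ∈ Set.Icc c d, t * W t ≤ S := by
    intro t ht
    obtain ⟨hα, hβ, hle, heq, hWt⟩ := hslfacts t ht
    have hmemK : ((sInf {x : ℝ | (x, t) ∈ Q}, t), (sSup {x : ℝ | (x, t) ∈ Q}, t)) ∈ K :=
      ⟨⟨hα, hβ⟩, rfl⟩
    have := hpmax hmemK
    rw [hWt]
    simpa [hSdef] using this
  -- Fubini: the volume of Q as an integral of slice widths
  have hvolQ : volume Q = ∫⁻ t, volume {x : ℝ | (x, t) ∈ Q} := by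
    rw [MeasureTheory.Measure.volume_eq_prod, Measure.prod_apply_symm hQmeas]
    rfl
  rcases eq_or_lt_of_le hS0 with hSz | hSpos
  · -- degenerate case : volume Q = 0, contradiction with Astar > 0
    exfalso
    have hz : volume Q = 0 := by
      refine le_antisymm ?_ zero_le
      rw [hvolQ]
      have hb : ∀ t, volume {x : ℝ | (x, t) ∈ Q} ≤
          ({0} : Set ℝ).indicator (fun _ => (⊤ : ℝ≥0∞)) t := by
        intro t
        by_cases ht0 : t = 0
        · subst ht0; simp
        · by_cases hne : {x : ℝ | (x, t) ∈ Q}.Nonempty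
          · have htJ : t ∈ Set.Icc c d := by
              rw [← hJ]
              obtain ⟨x, hx⟩ := hne
              exact ⟨(x, t), hx, rfl⟩
            have htpos : 0 < t := lt_of_le_of_ne (le_trans hc0 htJ.1) (Ne.symm ht0)
            obtain ⟨hα, hβ, hle, heq, hWt⟩ := hslfacts t htJ
            have h1 := hWmax t htJ
            rw [← hSz] at h1
            have h2 : W t ≤ 0 := by nlinarith
            have h3 : W t = 0 := le_antisymm h2 (hW0 t)
            rw [hWt] at h3
            conv_lhs => rw [heq]
            rw [Real.volume_Icc]
            simp [show sSup {x : ℝ | (x, t) ∈ Q} - sInf {x : ℝ | (x, t) ∈ Q} = 0 from h3]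
          · rw [Set.not_nonempty_iff_eq_empty] at hne
            rw [hne]
            simp
      calc (∫⁻ t, volume {x : ℝ | (x, t) ∈ Q}) ≤
          ∫⁻ t, ({0} : Set ℝ).indicator (fun _ => (⊤ : ℝ≥0∞)) t := lintegral_mono hb
        _ = 0 := by
            rw [lintegral_indicator (measurableSet_singleton 0), setLIntegral_const,
              Real.volume_singleton, mul_zero]
    rw [hz] at hQA
    simp at hQA
    linarith
  · -- main case
    have htspos : 0 < ts := by
      rcases lt_or_eq_of_le (le_trans hc0 htsJ.1) with h | h
      · exact h
      · exfalso; rw [hSdef, ← h] at hSpos; simp at hSpos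
    have hx12 : x1 < x2 := by
      by_contra h
      push_neg at h
      nlinarith
    -- the rectangle Icc x1 x2 ×ˢ Icc 0 ts is contained in T
    have hRsub : (Set.Icc x1 x2 ×ˢ Set.Icc 0 ts : Set (ℝ × ℝ)) ⊆ T := by
      rintro ⟨x, y⟩ ⟨hx, hy⟩
      simp only [Set.mem_Icc] at hx hy
      have hxts : (x, ts) ∈ Q := by
        set u : ℝ := (x2 - x) / (x2 - x1) with hudef
        set v : ℝ := (x - x1) / (x2 - x1) with hvdef
        have hu : 0 ≤ u := by apply div_nonneg <;> linarith
        have hv : 0 ≤ v := by apply div_nonneg <;> linarith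
        have hne2 : x2 - x1 ≠ 0 := by linarith
        have huv : u + v = 1 := by
          rw [hudef, hvdef, ← add_div]
          field_simp
          ring
        have h1 : (x1, ts) ∈ Q := by
          have : (x1, ts) = pstar.1 := rfl
          rw [this]; exact hpK1
        have h2 : (x2, ts) ∈ Q := by
          have : (x2, ts) = pstar.2 := by
            rw [hx2def, hpKeq]
          rw [this]; exact hpK2
        have hmem := hQconv h1 h2 hu hv huv
        have hpt : u • ((x1 : ℝ), ts) + v • ((x2 : ℝ), ts) = (x, ts) := by
          simp only [Prod.smul_mk, Prod.mk_add_mk, smul_eq_mul, Prod.mk.injEq]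
          constructor
          · rw [hudef, hvdef]; field_simp; ring
          · linear_combination ts * huv
        rw [hpt] at hmem
        exact hmem
      have hxT := hQT hxts
      rw [hT] at hxT ⊢
      refine ⟨hxT.1, ⟨hy.1, le_trans hy.2 ?_⟩⟩
      exact hxT.2.2
    have hSR : S ≤ Rstar := by
      have hrect : IsRect (Set.Icc x1 x2 ×ˢ Set.Icc 0 ts : Set (ℝ × ℝ)) :=
        ⟨x1, x2, 0, ts, hx12, htspos, rfl⟩
      have := hRub _ hrect hRsub
      have hvol : (volume (Set.Icc x1 x2 ×ˢ Set.Icc 0 ts : Set (ℝ × ℝ))).toReal = S := by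
        rw [MeasureTheory.Measure.volume_eq_prod, Measure.prod_prod, Real.volume_Icc,
          Real.volume_Icc, ← ENNReal.ofReal_mul (by linarith), ENNReal.toReal_ofReal
          (by nlinarith)]
        rw [hSdef]; ring
      linarith [hvol ▸ this]
    -- W is concave on [c,d]
    have hWconc : ConcaveOn ℝ (Set.Icc c d) W := by
      refine ⟨convex_Icc c d, ?_⟩
      intro t1 ht1 t2 ht2 u v hu hv huv
      set tb : ℝ := u • t1 + v • t2 with htbdef
      have htb : tb ∈ Set.Icc c d := (convex_Icc c d) ht1 ht2 hu hv huv
      obtain ⟨hα1, hβ1, hle1, heq1, hW1⟩ := hslfacts t1 ht1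
      obtain ⟨hα2, hβ2, hle2, heq2, hW2⟩ := hslfacts t2 ht2
      obtain ⟨hαb, hβb, hleb, heqb, hWb⟩ := hslfacts tb htb
      have hmemα : u • sInf {x : ℝ | (x, t1) ∈ Q} + v • sInf {x : ℝ | (x, t2) ∈ Q}
          ∈ {x : ℝ | (x, tb) ∈ Q} := by
        have hmem := hQconv hα1 hα2 hu hv huv
        have hpt : u • (sInf {x : ℝ | (x, t1) ∈ Q}, t1) + v • (sInf {x : ℝ | (x, t2) ∈ Q}, t2)
            = (u • sInf {x : ℝ | (x, t1) ∈ Q} + v • sInf {x : ℝ | (x, t2) ∈ Q}, tb) := rfl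
        rw [hpt] at hmem
        exact hmem
      have hmemβ : u • sSup {x : ℝ | (x, t1) ∈ Q} + v • sSup {x : ℝ | (x, t2) ∈ Q}
          ∈ {x : ℝ | (x, tb) ∈ Q} := by
        have hmem := hQconv hβ1 hβ2 hu hv huv
        have hpt : u • (sSup {x : ℝ | (x, t1) ∈ Q}, t1) + v • (sSup {x : ℝ | (x, t2) ∈ Q}, t2)
            = (u • sSup {x : ℝ | (x, t1) ∈ Q} + v • sSup {x : ℝ | (x, t2) ∈ Q}, tb) := rfl
        rw [hpt] at hmem
        exact hmem
      rw [heqb] at hmemα hmemβ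
      rw [hW1, hW2, hWb]
      simp only [smul_eq_mul] at *
      have h1 := hmemα.1
      have h2 := hmemβ.2
      nlinarith
    -- S = ts * W ts
    have hSeq : S = ts * W ts := by
      obtain ⟨hα, hβ, hle, heq, hWt⟩ := hslfacts ts htsJ
      have hx1s : x1 ∈ {x : ℝ | (x, ts) ∈ Q} := by
        show (x1, ts) ∈ Q
        exact hpK1
      have hx2s : x2 ∈ {x : ℝ | (x, ts) ∈ Q} := by
        show (x2, ts) ∈ Q
        rw [show ((x2 : ℝ), ts) = pstar.2 from by rw [hx2def, hpKeq]]
        exact hpK2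
      rw [heq] at hx1s hx2s
      have h1 : ts * W ts ≤ S := hWmax ts htsJ
      have h2 : x2 - x1 ≤ W ts := by rw [hWt]; linarith [hx1s.1, hx2s.2]
      have h3 : S ≤ ts * W ts := by
        rw [hSdef]
        exact mul_le_mul_of_nonneg_left h2 htspos.le
      linarith
    have hWtspos : 0 < W ts := by
      rcases mul_pos_iff.1 (hSeq ▸ hSpos) with ⟨_, h⟩ | ⟨h, _⟩
      · exact h
      · exact absurd htspos (not_lt.2 h.le)
    -- apply the concavity lemma
    have hWub := lemB hc0 htsJ htspos hWconc (fun t ht => hSeq ▸ hWmax t ht)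
    have hd2ts : d ≤ 2 * ts := by
      have h1 := hWub d ⟨hcd, le_refl d⟩
      have h2 : 0 ≤ 2 - d / ts := by
        by_contra h
        push_neg at h
        nlinarith [hW0 d]
      rw [sub_nonneg, div_le_iff₀ htspos] at h2
      linarith
    -- the integral bound
    set L : ℝ → ℝ := fun t => W ts * (2 - t / ts) with hLdef
    have hLcont : Continuous L := by fun_prop
    have hLnn : ∀ t ∈ Set.Icc c d, 0 ≤ L t := by
      intro t ht
      have h1 : t ≤ 2 * ts := le_trans ht.2 hd2ts
      have h2 : t / ts ≤ 2 := by rw [div_le_iff₀ htspos]; linarith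
      have : (0:ℝ) ≤ 2 - t / ts := by linarith
      exact mul_nonneg hWtspos.le this
    set I : ℝ := ∫ t in Set.Icc c d, L t with hIdef
    have hInn : 0 ≤ I := setIntegral_nonneg measurableSet_Icc hLnn
    have hvol_le : volume Q ≤ ENNReal.ofReal I := by
      rw [hvolQ]
      have hb : ∀ t, volume {x : ℝ | (x, t) ∈ Q} ≤
          (Set.Icc c d).indicator (fun t => ENNReal.ofReal (L t)) t := by
        intro t
        by_cases ht : t ∈ Set.Icc c d
        · rw [Set.indicator_of_mem ht]
          obtain ⟨hα, hβ, hle, heq, hWt⟩ := hslfacts t ht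
          have hvs : volume {x : ℝ | (x, t) ∈ Q} = ENNReal.ofReal (W t) := by
            conv_lhs => rw [heq]
            rw [Real.volume_Icc, hWt]
          rw [hvs]
          exact ENNReal.ofReal_le_ofReal (hWub t ht)
        · rw [Set.indicator_of_notMem ht]
          have hemp : {x : ℝ | (x, t) ∈ Q} = ∅ := by
            rw [Set.eq_empty_iff_forall_notMem]
            intro x hx
            exact ht (hJ ▸ (⟨(x, t), hx, rfl⟩ : t ∈ J))
          rw [hemp]
          simp
      calc (∫⁻ t, volume {x : ℝ | (x, t) ∈ Q}) ≤
          ∫⁻ t, (Set.Icc c d).indicator (fun t => ENNReal.ofReal (L t)) t := lintegral_mono hb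
        _ = ∫⁻ t in Set.Icc c d, ENNReal.ofReal (L t) := lintegral_indicator measurableSet_Icc _
        _ = ENNReal.ofReal I := by
            rw [hIdef, MeasureTheory.ofReal_integral_eq_lintegral_ofReal
              (hLcont.integrableOn_Icc) ((ae_restrict_iff' measurableSet_Icc).2
                (Filter.Eventually.of_forall hLnn))]
    have hAI : Astar ≤ I := by
      rw [← hQA]
      calc (volume Q).toReal ≤ (ENNReal.ofReal I).toReal :=
        ENNReal.toReal_mono ENNReal.ofReal_ne_top hvol_le
        _ = I := ENNReal.toReal_ofReal hInn
    have hI2S : I ≤ 2 * S := by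
      have hIeval : I = W ts * (2 * (d - c) - (d ^ 2 - c ^ 2) / (2 * ts)) := by
        rw [hIdef, MeasureTheory.integral_Icc_eq_integral_Ioc,
          ← intervalIntegral.integral_of_le hcd]
        have : ∀ t, L t = W ts * 2 - W ts / ts * t := by
          intro t; rw [hLdef]; field_simp
        simp only [this]
        rw [integral_sub intervalIntegrable_const (intervalIntegrable_id.const_mul _),
          intervalIntegral.integral_const, intervalIntegral.integral_const_mul, integral_id]
        simp only [smul_eq_mul]
        field_simp
      rw [hIeval, hSeq]
      clear_value c d ts W S I
      have hkey : 2 * (d - c) - (d ^ 2 - c ^ 2) / (2 * ts) ≤ 2 * ts := by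
        rw [sub_le_iff_le_add, ← sub_le_iff_le_add']
        rw [le_div_iff₀ (by positivity)]
        nlinarith [sq_nonneg (2 * ts - d), mul_nonneg hc0 (by linarith : (0:ℝ) ≤ 4 * ts - c)]
      calc W ts * (2 * (d - c) - (d ^ 2 - c ^ 2) / (2 * ts)) ≤ W ts * (2 * ts) :=
          mul_le_mul_of_nonneg_left hkey hWtspos.le
        _ = 2 * (ts * W ts) := by ring
    linarith
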